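/- Let V be a type and let c : V × V → ℤ be a finitely supported function with c(v,v) = 0 for every v ∈ V and c(a,b) ≥ 0 for all a, b ∈ V. Write ∂c(v) = Σ_u (c(u,v) − c(v,u)) (a finite sum). If z ∈ V satisfies ∂c(z) < 0, then there exist an integer N ≥ 1 and vertices v₀, v₁, …, v_N ∈ V such that: (1) v₀ = z; (2) c(v_{i−1}, v_i) > 0 for every i = 1, …, N; (3) ∂c(v_N) > 0; and (4) the ordered pairs (v_{i−1}, v_i), i = 1, …, N, are pairwise distinct. Symmetrically, if ∂c(z) > 0, then there exist N ≥ 1 and vertices v₀, …, v_N with v_N = z, c(v_{i−1}, v_i) > 0 for every i, ∂c(v₀) < 0, and the ordered pairs (v_{i−1}, v_i) pairwise distinct. -/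

import Mathlib

/-- The boundary of an integer 1-chain `c : V × V → ℤ`:
`∂c(v) = Σ_u (c(u,v) − c(v,u))` (a finite sum when `c` is finitely supported). -/
noncomputable def chainBd {V : Type*} (c : V × V → ℤ) (v : V) : ℤ :=
  ∑ᶠ u : V, (c (u, v) - c (v, u))

private lemma chain_walk {V : Type*} {c : V × V → ℤ} {z t : V}
    (h : Relation.ReflTransGen (fun a b => 0 < c (a, b)) z t) :
    ∃ n, ∃ v : ℕ → V, v 0 = z ∧ (∀ i < n, 0 < c (v i, v (i + 1))) ∧ v n = t := by
  induction h with
  | refl => exact ⟨0, fun _ => z, rfl, fun i hi => absurd hi (Nat.not_lt_zero i), rfl⟩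
  | @tail y x h1 h2 ih =>
    obtain ⟨n, v, hv0, hedge, hvn⟩ := ih
    refine ⟨n + 1, fun i => if i ≤ n then v i else x, by simp [hv0], ?_, by simp⟩
    intro i hi
    rcases Nat.lt_or_ge i n with h | h
    · simpa [Nat.le_of_lt h, Nat.succ_le_of_lt h] using hedge i h
    · have : i = n := by omega
      subst this
      simpa [hvn] using h2

private lemma helper {V : Type*} (c : V × V → ℤ)
    (hfin : (Function.support c).Finite)
    (hnonneg : ∀ a b : V, 0 ≤ c (a, b))
    (z : V) (hz : chainBd c z < 0) :
    ∃ (N : ℕ) (v : Fin (N + 1) → V), 1 ≤ N ∧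
      v 0 = z ∧
      (∀ i : Fin N, 0 < c (v i.castSucc, v i.succ)) ∧
      0 < chainBd c (v (Fin.last N)) ∧
      Function.Injective (fun i : Fin N => (v i.castSucc, v i.succ)) := by
  classical
  set rel : V → V → Prop := fun a b => 0 < c (a, b) with hrel
  set R : Set V := {x | Relation.ReflTransGen rel z x} with hR
  -- R is finite
  have hRsub : R ⊆ insert z (Prod.snd '' Function.support c) := by
    intro x hx
    rcases Relation.ReflTransGen.cases_tail hx with h | ⟨y, _, hyx⟩
    · exact h ▸ Set.mem_insert _ _
    · exact Set.mem_insert_of_mem _ ⟨(y, x), by exact fun h0 => by simp [hrel, h0] at hyx, rfl⟩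
  have hRfin : R.Finite := (((hfin.image Prod.snd).insert z)).subset hRsub
  set Rf : Finset V := hRfin.toFinset with hRf
  set T : Finset V := Rf ∪ (hfin.image Prod.fst).toFinset ∪ (hfin.image Prod.snd).toFinset
    with hT
  have hRfT : Rf ⊆ T := by intro x hx; simp [hT, hx]
  have hbd : ∀ v : V, chainBd c v = ∑ u ∈ T, (c (u, v) - c (v, u)) := by
    intro v
    apply finsum_eq_finset_sum_of_support_subset
    intro u hu
    have : c (u, v) ≠ 0 ∨ c (v, u) ≠ 0 := by
      by_contra h; push_neg at h; simp [h.1, h.2] at hu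
    rcases this with h | h
    · have : u ∈ (hfin.image Prod.fst).toFinset := by
        simp only [Set.Finite.mem_toFinset]; exact ⟨(u, v), h, rfl⟩
      simp [hT]; tauto
    · have : u ∈ (hfin.image Prod.snd).toFinset := by
        simp only [Set.Finite.mem_toFinset]; exact ⟨(v, u), h, rfl⟩
      simp [hT]; tauto
  -- closure of R under positive out-edges
  have hclosed : ∀ v ∈ Rf, ∀ u, u ∉ Rf → c (v, u) = 0 := by
    intro v hv u hu
    rcases lt_or_eq_of_le (hnonneg v u) with h | h
    · exfalso
      apply hu
      simp only [hRf, Set.Finite.mem_toFinset] at hv ⊢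
      exact Relation.ReflTransGen.tail hv h
    · exact h.symm
  -- the sum of the boundary over R is nonnegative
  have hsum : 0 ≤ ∑ v ∈ Rf, chainBd c v := by
    have : ∑ v ∈ Rf, chainBd c v
        = (∑ v ∈ Rf, ∑ u ∈ T, c (u, v)) - ∑ v ∈ Rf, ∑ u ∈ T, c (v, u) := by
      simp only [hbd, Finset.sum_sub_distrib]
    rw [this, sub_nonneg]
    have h2 : ∑ v ∈ Rf, ∑ u ∈ T, c (v, u) = ∑ v ∈ Rf, ∑ u ∈ Rf, c (v, u) := by
      refine Finset.sum_congr rfl fun v hv => ?_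
      exact (Finset.sum_subset hRfT fun u _ hu => hclosed v hv u hu).symm
    rw [h2, Finset.sum_comm]
    refine Finset.sum_le_sum fun u hu => ?_
    exact Finset.sum_le_sum_of_subset_of_nonneg hRfT fun v _ _ => hnonneg v u
  have hzRf : z ∈ Rf := by
    simp only [hRf, Set.Finite.mem_toFinset]; exact Relation.ReflTransGen.refl
  -- there is a positive-boundary point in R
  have hex_t : ∃ t, Relation.ReflTransGen rel z t ∧ 0 < chainBd c t := by
    by_contra h
    push_neg at h
    have hlt : ∑ v ∈ Rf, chainBd c v < ∑ v ∈ Rf, (0 : ℤ) := by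
      refine Finset.sum_lt_sum (fun i hi => ?_) ⟨z, hzRf, hz⟩
      exact h i (by simp only [hRf, Set.Finite.mem_toFinset] at hi; exact hi)
    simp only [Finset.sum_const_zero] at hlt
    omega
  obtain ⟨t, htR, ht⟩ := hex_t
  have hzt : z ≠ t := fun h => by rw [h] at hz; omega
  -- shortest walk from z to t
  set P : ℕ → Prop := fun n =>
    ∃ v : ℕ → V, v 0 = z ∧ (∀ i < n, 0 < c (v i, v (i + 1))) ∧ v n = t with hP
  have hexP : ∃ n, P n := chain_walk htR
  set n : ℕ := Nat.find hexP with hn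
  obtain ⟨v, hv0, hedge, hvn⟩ : P n := Nat.find_spec hexP
  have hn1 : 1 ≤ n := by
    rcases Nat.eq_zero_or_pos n with h | h
    · exact absurd (hv0.symm.trans (h ▸ hvn)) hzt
    · exact h
  -- vertices of a shortest walk are pairwise distinct
  have hinj : ∀ a b, a ≤ n → b ≤ n → v a = v b → a = b := by
    have key : ∀ a b, a < b → b ≤ n → v a ≠ v b := by
      intro a b hab hbn hvab
      set m : ℕ := n - (b - a) with hm
      have hman : a ≤ m := by omega
      have hmn : m < n := by omega
      apply Nat.find_min hexP hmn
      refine ⟨fun i => if i ≤ a then v i else v (i + (b - a)), by simp [hv0], ?_, ?_⟩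
      · intro i hi
        rcases Nat.lt_or_ge i a with h | h
        · simpa [Nat.le_of_lt h, Nat.succ_le_of_lt h] using hedge i (by omega)
        rcases Nat.eq_or_lt_of_le h with h' | h'
        · have hia : i = a := h'.symm
          subst hia
          have hbn' : b < n := by omega
          have hb1 := hedge b hbn'
          rw [← hvab] at hb1
          simp only [le_refl, if_pos, if_neg (by omega : ¬ i + 1 ≤ i)]
          rw [show i + 1 + (b - i) = b + 1 from by omega]
          exact hb1
        · have h1 : ¬ i ≤ a := by omega
          have h2 : ¬ i + 1 ≤ a := by omega
          have h3 : i + 1 + (b - a) = i + (b - a) + 1 := by omega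
          simpa [h1, h2, h3] using hedge (i + (b - a)) (by omega)
      · rcases Nat.eq_or_lt_of_le hman with h | h
        · have hb : b = n := by omega
          simp only [← h, le_refl, if_pos]
          rw [hvab, hb, hvn]
        · have h1 : ¬ m ≤ a := by omega
          have h2 : m + (b - a) = n := by omega
          simp [h1, h2, hvn]
    intro a b ha hb hvab
    rcases lt_trichotomy a b with h | h | h
    · exact absurd hvab (key a b h hb)
    · exact h
    · exact absurd hvab.symm (key b a h ha)
  refine ⟨n, fun i => v i, hn1, by simpa using hv0, ?_, ?_, ?_⟩
  · intro i
    simpa using hedge i i.isLt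
  · simpa [Fin.val_last, hvn] using ht
  · intro i j hij
    have h1 : v (i : ℕ) = v (j : ℕ) := by
      have := congrArg Prod.fst hij
      simpa using this
    exact Fin.ext (hinj i j (le_of_lt i.isLt) (le_of_lt j.isLt) h1)

private lemma chainBd_swap {V : Type*} (c : V × V → ℤ) (v : V) :
    chainBd (fun p => c p.swap) v = - chainBd c v := by
  unfold chainBd
  rw [← finsum_neg_distrib]
  refine finsum_congr fun u => ?_
  simp only [Prod.swap]
  ring

/-- From any point of negative boundary multiplicity of a nonnegative finitely supported
1-chain one can select a chain of pairwise distinct oriented edges, each with positive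
multiplicity, ending at a point of positive boundary multiplicity; and symmetrically. -/
theorem statement0 {V : Type*} (c : V × V → ℤ)
    (hfin : (Function.support c).Finite)
    (hloop : ∀ v : V, c (v, v) = 0)
    (hnonneg : ∀ a b : V, 0 ≤ c (a, b))
    (z : V) :
    (chainBd c z < 0 →
      ∃ (N : ℕ) (v : Fin (N + 1) → V), 1 ≤ N ∧
        v 0 = z ∧
        (∀ i : Fin N, 0 < c (v i.castSucc, v i.succ)) ∧
        0 < chainBd c (v (Fin.last N)) ∧
        Function.Injective (fun i : Fin N => (v i.castSucc, v i.succ))) ∧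
    (0 < chainBd c z →
      ∃ (N : ℕ) (v : Fin (N + 1) → V), 1 ≤ N ∧
        v (Fin.last N) = z ∧
        (∀ i : Fin N, 0 < c (v i.castSucc, v i.succ)) ∧
        chainBd c (v 0) < 0 ∧
        Function.Injective (fun i : Fin N => (v i.castSucc, v i.succ))) := by
  constructor
  · exact fun hz => helper c hfin hnonneg z hz
  · intro hz
    set c' : V × V → ℤ := fun p => c p.swap with hc'
    have hfin' : (Function.support c').Finite := by
      refine (hfin.image Prod.swap).subset fun p hp => ?_
      exact ⟨p.swap, hp, Prod.swap_swap p⟩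
    have hz' : chainBd c' z < 0 := by rw [chainBd_swap]; omega
    obtain ⟨N, v, hN, hv0, hedge, hlast, hinj⟩ :=
      helper c' hfin' (fun a b => hnonneg b a) z hz'
    refine ⟨N, fun i => v i.rev, hN, ?_, ?_, ?_, ?_⟩
    · show v (Fin.last N).rev = z
      rw [Fin.rev_last]; exact hv0
    · intro i
      show 0 < c (v i.castSucc.rev, v i.succ.rev)
      rw [Fin.rev_castSucc, Fin.rev_succ]
      have h := hedge i.rev
      simpa [hc'] using h
    · show chainBd c (v (Fin.rev 0)) < 0
      rw [Fin.rev_zero]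
      have h := hlast
      rw [hc', chainBd_swap] at h
      omega
    · intro i j hij
      simp only [Fin.rev_castSucc, Fin.rev_succ] at hij
      have h1 : (fun k : Fin N => (v k.castSucc, v k.succ)) i.rev
          = (fun k : Fin N => (v k.castSucc, v k.succ)) j.rev := by
        have e1 := congrArg Prod.fst hij
        have e2 := congrArg Prod.snd hij
        simp only at e1 e2
        exact Prod.ext_iff.mpr ⟨e2, e1⟩
      exact Fin.rev_injective (hinj h1)
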